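/- Let K := [[αRᵀR, 0, Tᵀ],[0, BᵀB, Aᵀ],[T, A, 0]] be the KKT matrix and P := diag(αRᵀR + ρTᵀT, BᵀB + ρAᵀA, (1/ρ)I_{n_u}) the block diagonal preconditioner, which is symmetric positive definite since R and A are invertible and α, ρ > 0. Then the symmetrically preconditioned KKT matrix satisfies the identity P^{-1/2} K P^{-1/2} = [[I − FᵀF, 0, Fᵀ],[0, I − GᵀG, Gᵀ],[F, G, 0]] = E. -/

import Mathlib

open Matrix

/-- The vector in Euclidean space obtained by applying the matrix `M` to `x`
(matrix-vector multiplication, viewed as a map between Euclidean spaces). -/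
noncomputable def mulVecE {ι κ : Type} [Fintype ι] [Fintype κ] [DecidableEq κ]
    (M : Matrix ι κ ℝ) (x : EuclideanSpace ℝ κ) : EuclideanSpace ℝ ι :=
  Matrix.toEuclideanLin M x

/-- The spectral norm (Euclidean operator norm) of a matrix. -/
noncomputable def specNorm {ι κ : Type} [Fintype ι] [Fintype κ] [DecidableEq κ]
    (M : Matrix ι κ ℝ) : ℝ :=
  ‖LinearMap.toContinuousLinearMap (Matrix.toEuclideanLin M)‖

/-- The square root of a positive semidefinite matrix, with its meaning in the older Mathlib
(removed from the current one). -/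
noncomputable def Matrix.PosSemidef.sqrt {n : Type*} [Fintype n] [DecidableEq n]
    {A : Matrix n n ℝ} (hA : A.PosSemidef) : Matrix n n ℝ :=
  hA.1.eigenvectorUnitary.1 * diagonal ((↑) ∘ (√·) ∘ hA.1.eigenvalues) *
    (star hA.1.eigenvectorUnitary : Matrix n n ℝ)

open scoped MatrixOrder in
lemma Matrix.PosSemidef.sqrt_eq_cfc {n : Type*} [Fintype n] [DecidableEq n]
    {A : Matrix n n ℝ} (hA : A.PosSemidef) : hA.sqrt = CFC.sqrt A := by
  rw [CFC.sqrt_eq_real_sqrt A hA.nonneg, cfcₙ_eq_cfc, hA.1.cfc_eq]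
  rw [IsHermitian.cfc, Unitary.conjStarAlgAut_apply]
  rfl

open scoped MatrixOrder in
lemma Matrix.PosSemidef.posSemidef_sqrt {n : Type*} [Fintype n] [DecidableEq n]
    {A : Matrix n n ℝ} (hA : A.PosSemidef) : hA.sqrt.PosSemidef := by
  rw [hA.sqrt_eq_cfc]; exact (CFC.sqrt_nonneg A).posSemidef

open scoped MatrixOrder in
lemma Matrix.PosSemidef.sqrt_mul_self {n : Type*} [Fintype n] [DecidableEq n]
    {A : Matrix n n ℝ} (hA : A.PosSemidef) : hA.sqrt * hA.sqrt = A := by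
  rw [hA.sqrt_eq_cfc]; exact CFC.sqrt_mul_sqrt_self A hA.nonneg

open scoped MatrixOrder in
lemma Matrix.PosSemidef.eq_sqrt_of_sq_eq {n : Type*} [Fintype n] [DecidableEq n]
    {A : Matrix n n ℝ} (hA : A.PosSemidef) {B : Matrix n n ℝ} (hB : B.PosSemidef)
    (h : A ^ 2 = B) : A = hB.sqrt := by
  rw [hB.sqrt_eq_cfc]; exact (CFC.sqrt_unique (by rw [← sq]; exact h) hA.nonneg).symm


lemma psd_smul {n : Type} [Fintype n] {A : Matrix n n ℝ} (hA : A.PosSemidef)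
    {c : ℝ} (hc : 0 ≤ c) : (c • A).PosSemidef := by
  exact hA.smul hc

lemma psd_fromBlocks_diag {m n : Type} [Fintype m] [Fintype n]
    {A : Matrix m m ℝ} {D : Matrix n n ℝ} (hA : A.PosSemidef) (hD : D.PosSemidef) :
    (fromBlocks A 0 0 D).PosSemidef := by
  refine posSemidef_iff_dotProduct_mulVec.mpr ⟨?_, fun x => ?_⟩
  · unfold Matrix.IsHermitian
    rw [fromBlocks_conjTranspose, hA.1.eq, hD.1.eq, conjTranspose_zero, conjTranspose_zero]
  · have hx : x = Sum.elim (x ∘ Sum.inl) (x ∘ Sum.inr) := by ext i; cases i <;> rfl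
    rw [hx, fromBlocks_mulVec]
    simp only [zero_mulVec, add_zero, zero_add]
    have hstar : star (Sum.elim (x ∘ Sum.inl) (x ∘ Sum.inr))
        = Sum.elim (star (x ∘ Sum.inl)) (star (x ∘ Sum.inr)) := by
      ext i; cases i <;> rfl
    rw [hstar, sumElim_dotProduct_sumElim]
    exact add_nonneg ((posSemidef_iff_dotProduct_mulVec.mp hA).2 _)
      ((posSemidef_iff_dotProduct_mulVec.mp hD).2 _)

lemma smul_fromColumns' {m n₁ n₂ : Type} (c : ℝ) (X : Matrix m n₁ ℝ) (Y : Matrix m n₂ ℝ) :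
    c • fromCols X Y = fromCols (c • X) (c • Y) := by
  ext i (j | j) <;> rfl

lemma smul_fromRows' {m₁ m₂ n : Type} (c : ℝ) (X : Matrix m₁ n ℝ) (Y : Matrix m₂ n ℝ) :
    c • fromRows X Y = fromRows (c • X) (c • Y) := by
  ext (i | i) j <;> rfl

/-- The symmetrically preconditioned KKT matrix `P^{-1/2} K P^{-1/2}` equals the
block matrix `E = [[I − FᵀF, 0, Fᵀ],[0, I − GᵀG, Gᵀ],[F, G, 0]]`. -/
theorem stmt2
    (nq nu nobs : ℕ) (α ρ : ℝ) (hα : 0 < α) (hρ : 0 < ρ)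
    (R : Matrix (Fin nq) (Fin nq) ℝ) (T : Matrix (Fin nu) (Fin nq) ℝ)
    (A : Matrix (Fin nu) (Fin nu) ℝ) (B : Matrix (Fin nobs) (Fin nu) ℝ)
    (hR : IsUnit R.det) (hA : IsUnit A.det)
    (hSR : ((α / ρ) • (Rᵀ * R) + Tᵀ * T).PosDef)
    (hSA : ((1 / ρ) • (Bᵀ * B) + Aᵀ * A).PosDef)
    (F : Matrix (Fin nu) (Fin nq) ℝ) (hF : F = T * hSR.posSemidef.sqrt⁻¹)
    (G : Matrix (Fin nu) (Fin nu) ℝ) (hG : G = A * hSA.posSemidef.sqrt⁻¹)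
    (K : Matrix ((Fin nq ⊕ Fin nu) ⊕ Fin nu) ((Fin nq ⊕ Fin nu) ⊕ Fin nu) ℝ)
    (hK : K = fromBlocks
      (fromBlocks (α • (Rᵀ * R)) 0 0 (Bᵀ * B))
      (fromCols T A)ᵀ
      (fromCols T A) 0)
    (P : Matrix ((Fin nq ⊕ Fin nu) ⊕ Fin nu) ((Fin nq ⊕ Fin nu) ⊕ Fin nu) ℝ)
    (hP : P = fromBlocks
      (fromBlocks (α • (Rᵀ * R) + ρ • (Tᵀ * T)) 0 0 (Bᵀ * B + ρ • (Aᵀ * A))) 0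
      0 ((1 / ρ) • 1))
    (hPpd : P.PosDef)
    (E : Matrix ((Fin nq ⊕ Fin nu) ⊕ Fin nu) ((Fin nq ⊕ Fin nu) ⊕ Fin nu) ℝ)
    (hE : E = fromBlocks
      (fromBlocks (1 - Fᵀ * F) 0 0 (1 - Gᵀ * G))
      (fromCols F G)ᵀ
      (fromCols F G) 0) :
    hPpd.posSemidef.sqrt⁻¹ * K * hPpd.posSemidef.sqrt⁻¹ = E := by
  set s : ℝ := Real.sqrt ρ with hs_def
  have hs : 0 < s := Real.sqrt_pos.mpr hρ
  have hss : s * s = ρ := Real.mul_self_sqrt hρ.le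
  set Q1 := (α / ρ) • (Rᵀ * R) + Tᵀ * T with hQ1
  set Q2 := (1 / ρ) • (Bᵀ * B) + Aᵀ * A with hQ2
  set S1 := hSR.posSemidef.sqrt with hS1def
  set S2 := hSA.posSemidef.sqrt with hS2def
  have hS1psd : S1.PosSemidef := hSR.posSemidef.posSemidef_sqrt
  have hS2psd : S2.PosSemidef := hSA.posSemidef.posSemidef_sqrt
  have hS1sq : S1 * S1 = Q1 := hSR.posSemidef.sqrt_mul_self
  have hS2sq : S2 * S2 = Q2 := hSA.posSemidef.sqrt_mul_self
  have hd1 : IsUnit S1.det := by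
    have h : S1.det * S1.det = Q1.det := by rw [← det_mul, hS1sq]
    refine isUnit_iff_ne_zero.mpr fun h0 => ?_
    rw [h0, mul_zero] at h
    exact hSR.det_pos.ne' h.symm
  have hd2 : IsUnit S2.det := by
    have h : S2.det * S2.det = Q2.det := by rw [← det_mul, hS2sq]
    refine isUnit_iff_ne_zero.mpr fun h0 => ?_
    rw [h0, mul_zero] at h
    exact hSA.det_pos.ne' h.symm
  have hS1inv : S1 * S1⁻¹ = 1 := mul_nonsing_inv _ hd1
  have hS1inv' : S1⁻¹ * S1 = 1 := nonsing_inv_mul _ hd1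
  have hS2inv : S2 * S2⁻¹ = 1 := mul_nonsing_inv _ hd2
  have hS2inv' : S2⁻¹ * S2 = 1 := nonsing_inv_mul _ hd2
  have hS1t : S1ᵀ = S1 := by
    have := hS1psd.1.eq
    rwa [← conjTranspose_eq_transpose_of_trivial]
  have hS2t : S2ᵀ = S2 := by
    have := hS2psd.1.eq
    rwa [← conjTranspose_eq_transpose_of_trivial]
  have hS1it : (S1⁻¹)ᵀ = S1⁻¹ := by rw [transpose_nonsing_inv, hS1t]
  have hS2it : (S2⁻¹)ᵀ = S2⁻¹ := by rw [transpose_nonsing_inv, hS2t]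
  -- the square root of P
  set M : Matrix ((Fin nq ⊕ Fin nu) ⊕ Fin nu) ((Fin nq ⊕ Fin nu) ⊕ Fin nu) ℝ :=
    fromBlocks (fromBlocks (s • S1) 0 0 (s • S2)) 0 0 (s⁻¹ • 1) with hM
  have b1 : (s • S1) * (s • S1) = α • (Rᵀ * R) + ρ • (Tᵀ * T) := by
    rw [Matrix.smul_mul, Matrix.mul_smul, smul_smul, hss, hS1sq, hQ1, smul_add, smul_smul,
      mul_div_cancel₀ _ hρ.ne']
  have b2 : (s • S2) * (s • S2) = Bᵀ * B + ρ • (Aᵀ * A) := by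
    rw [Matrix.smul_mul, Matrix.mul_smul, smul_smul, hss, hS2sq, hQ2, smul_add, smul_smul,
      mul_one_div, div_self hρ.ne', one_smul]
  have b3 : (s⁻¹ • (1 : Matrix (Fin nu) (Fin nu) ℝ)) * (s⁻¹ • 1)
      = (1 / ρ) • (1 : Matrix (Fin nu) (Fin nu) ℝ) := by
    rw [Matrix.smul_mul, Matrix.mul_smul, smul_smul, Matrix.mul_one]
    congr 1
    rw [← hss]
    field_simp
  have hMsq : M ^ 2 = P := by
    rw [pow_two, hM, hP]
    simp only [fromBlocks_multiply, Matrix.mul_zero, Matrix.zero_mul, add_zero, zero_add,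
      b1, b2, b3]
  have hMpsd : M.PosSemidef := by
    apply psd_fromBlocks_diag
    · exact psd_fromBlocks_diag (psd_smul hS1psd hs.le) (psd_smul hS2psd hs.le)
    · exact psd_smul Matrix.PosSemidef.one (by positivity)
  have hMeq : M = hPpd.posSemidef.sqrt := hMpsd.eq_sqrt_of_sq_eq hPpd.posSemidef hMsq
  -- the inverse of M
  set N : Matrix ((Fin nq ⊕ Fin nu) ⊕ Fin nu) ((Fin nq ⊕ Fin nu) ⊕ Fin nu) ℝ :=
    fromBlocks (fromBlocks (s⁻¹ • S1⁻¹) 0 0 (s⁻¹ • S2⁻¹)) 0 0 (s • 1) with hN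
  have a1 : (s • S1) * (s⁻¹ • S1⁻¹) = 1 := by
    rw [Matrix.smul_mul, Matrix.mul_smul, smul_smul, mul_inv_cancel₀ hs.ne', one_smul, hS1inv]
  have a2 : (s • S2) * (s⁻¹ • S2⁻¹) = 1 := by
    rw [Matrix.smul_mul, Matrix.mul_smul, smul_smul, mul_inv_cancel₀ hs.ne', one_smul, hS2inv]
  have a3 : (s⁻¹ • (1 : Matrix (Fin nu) (Fin nu) ℝ)) * (s • 1) = 1 := by
    rw [Matrix.smul_mul, Matrix.mul_smul, smul_smul, inv_mul_cancel₀ hs.ne', one_smul,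
      Matrix.mul_one]
  have hMN : M * N = 1 := by
    rw [hM, hN]
    simp only [fromBlocks_multiply, Matrix.mul_zero, Matrix.zero_mul, add_zero, zero_add,
      a1, a2, a3, fromBlocks_one]
  have hMinv : hPpd.posSemidef.sqrt⁻¹ = N := by
    rw [← hMeq]; exact inv_eq_right_inv hMN
  -- block identities for the final product
  have c1 : (s⁻¹ • S1⁻¹) * (α • (Rᵀ * R)) * (s⁻¹ • S1⁻¹) = 1 - Fᵀ * F := by
    have e : (s⁻¹ • S1⁻¹) * (α • (Rᵀ * R)) * (s⁻¹ • S1⁻¹)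
        = S1⁻¹ * ((α / ρ) • (Rᵀ * R)) * S1⁻¹ := by
      simp only [Matrix.smul_mul, Matrix.mul_smul, smul_smul]
      congr 1
      rw [← hss]
      field_simp
      try ring
    rw [e]
    have hsub : (α / ρ) • (Rᵀ * R) = Q1 - Tᵀ * T := by rw [hQ1]; abel
    rw [hsub, Matrix.mul_sub, Matrix.sub_mul, ← hS1sq]
    have h1 : S1⁻¹ * (S1 * S1) * S1⁻¹ = 1 := by
      rw [← Matrix.mul_assoc, hS1inv', Matrix.one_mul, hS1inv]
    rw [h1, hF, Matrix.transpose_mul, hS1it]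
    simp only [Matrix.mul_assoc]
  have c2 : (s⁻¹ • S2⁻¹) * (Bᵀ * B) * (s⁻¹ • S2⁻¹) = 1 - Gᵀ * G := by
    have e : (s⁻¹ • S2⁻¹) * (Bᵀ * B) * (s⁻¹ • S2⁻¹)
        = S2⁻¹ * ((1 / ρ) • (Bᵀ * B)) * S2⁻¹ := by
      simp only [Matrix.smul_mul, Matrix.mul_smul, smul_smul]
      congr 1
      rw [← hss]
      field_simp
    rw [e]
    have hsub : (1 / ρ) • (Bᵀ * B) = Q2 - Aᵀ * A := by rw [hQ2]; abel
    rw [hsub, Matrix.mul_sub, Matrix.sub_mul, ← hS2sq]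
    have h1 : S2⁻¹ * (S2 * S2) * S2⁻¹ = 1 := by
      rw [← Matrix.mul_assoc, hS2inv', Matrix.one_mul, hS2inv]
    rw [h1, hG, Matrix.transpose_mul, hS2it]
    simp only [Matrix.mul_assoc]
  have hFt : Fᵀ = S1⁻¹ * Tᵀ := by rw [hF, Matrix.transpose_mul, hS1it]
  have hGt : Gᵀ = S2⁻¹ * Aᵀ := by rw [hG, Matrix.transpose_mul, hS2it]
  -- assemble
  rw [hMinv, hK, hE, hN]
  rw [fromBlocks_multiply, fromBlocks_multiply]
  simp only [Matrix.mul_zero, Matrix.zero_mul, add_zero, zero_add]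
  have eTL : fromBlocks (s⁻¹ • S1⁻¹) 0 0 (s⁻¹ • S2⁻¹)
        * fromBlocks (α • (Rᵀ * R)) 0 0 (Bᵀ * B)
        * fromBlocks (s⁻¹ • S1⁻¹) 0 0 (s⁻¹ • S2⁻¹)
      = fromBlocks (1 - Fᵀ * F) 0 0 (1 - Gᵀ * G) := by
    simp only [fromBlocks_multiply, Matrix.mul_zero, Matrix.zero_mul, add_zero, zero_add, c1, c2]
  have eTR : fromBlocks (s⁻¹ • S1⁻¹) 0 0 (s⁻¹ • S2⁻¹) * (fromCols T A)ᵀ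
        * (s • (1 : Matrix (Fin nu) (Fin nu) ℝ))
      = (fromCols F G)ᵀ := by
    rw [transpose_fromCols, transpose_fromCols, Matrix.mul_smul, Matrix.mul_one,
      fromBlocks_mul_fromRows]
    simp only [Matrix.zero_mul, add_zero, zero_add, Matrix.smul_mul]
    rw [smul_fromRows', hFt, hGt]
    simp [smul_smul, mul_inv_cancel₀ hs.ne']
  have eBL : (s • (1 : Matrix (Fin nu) (Fin nu) ℝ)) * fromCols T A
        * fromBlocks (s⁻¹ • S1⁻¹) 0 0 (s⁻¹ • S2⁻¹)
      = fromCols F G := by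
    rw [Matrix.smul_mul, Matrix.one_mul, Matrix.smul_mul, fromCols_mul_fromBlocks]
    simp only [Matrix.mul_zero, add_zero, zero_add, Matrix.mul_smul]
    rw [smul_fromColumns', hF, hG]
    simp [smul_smul, mul_inv_cancel₀ hs.ne']
  rw [eTL, eTR, eBL]
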